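/- (a) Let K be a coherent SDS and W₁, W₂ ⊆ 𝒫(T): if E(W₁) ⊆ E(W₂) and W₁ ⊆ K then W₂ ⊆ K; hence if E(W₁) = E(W₂) then W₁ ⊆ K ⟺ W₂ ⊆ K. (b) Let K be a finitely coherent SDS and W₁, W₂ finite subsets of 𝒫(T): if E(W₁) ⊆ E(W₂) and W₁ ⊆ K then W₂ ⊆ K; hence if E(W₁) = E(W₂) then W₁ ⊆ K ⟺ W₂ ⊆ K. -/
import Mathlib


universe u

variable {T : Type u}

/-- `cl` is a closure operator on subsets of `T`. -/
def IsClosure (cl : Set T → Set T) : Prop :=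
  (∀ A : Set T, A ⊆ cl A) ∧
  (∀ A B : Set T, A ⊆ B → cl A ⊆ cl B) ∧
  (∀ A : Set T, cl (cl A) = cl A)

/-- `cl` is finitary: the closure of a set is the union of the closures of its
finite subsets. -/
def IsFinitary (cl : Set T → Set T) : Prop :=
  ∀ A : Set T, cl A = ⋃ F ∈ {F : Set T | F.Finite ∧ F ⊆ A}, cl F

/-- A coherent set of desirable things (SDT): closed and avoiding the forbidden
things `Tneg`. -/
def CohSDT (cl : Set T → Set T) (Tneg : Set T) (D : Set T) : Prop :=
  cl D = D ∧ D ∩ Tneg = ∅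

/-- Selection maps of a collection `W` of sets of things: maps choosing an
element of each member of `W`. -/
def Sel (W : Set (Set T)) : Type u :=
  {σ : Set T → T // ∀ A ∈ W, σ A ∈ A}

/-- A coherent set of desirable sets of things (SDS): axioms K1–K5. -/
def CohSDS (cl : Set T → Set T) (Tneg : Set T) (K : Set (Set T)) : Prop :=
  (∅ : Set T) ∉ K ∧
  (∀ A₁ ∈ K, ∀ A₂ : Set T, A₁ ⊆ A₂ → A₂ ∈ K) ∧
  (∀ A ∈ K, A \ Tneg ∈ K) ∧
  (∀ t ∈ cl (∅ : Set T), ({t} : Set T) ∈ K) ∧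
  (∀ W ⊆ K, W.Nonempty →
    ∀ f : Sel W → T, (∀ σ : Sel W, f σ ∈ cl (σ.1 '' W)) → Set.range f ∈ K)

/-- A finitely coherent SDS: axioms K1–K4 together with K5 restricted to
nonempty finite subcollections. -/
def FinCohSDS (cl : Set T → Set T) (Tneg : Set T) (K : Set (Set T)) : Prop :=
  (∅ : Set T) ∉ K ∧
  (∀ A₁ ∈ K, ∀ A₂ : Set T, A₁ ⊆ A₂ → A₂ ∈ K) ∧
  (∀ A ∈ K, A \ Tneg ∈ K) ∧
  (∀ t ∈ cl (∅ : Set T), ({t} : Set T) ∈ K) ∧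
  (∀ W ⊆ K, W.Finite → W.Nonempty →
    ∀ f : Sel W → T, (∀ σ : Sel W, f σ ∈ cl (σ.1 '' W)) → Set.range f ∈ K)

/-- A finitely coherent set of desirable finite sets of things (SDFS):
axioms F1–F5. -/
def FinCohSDFS (cl : Set T → Set T) (Tneg : Set T) (K : Set (Set T)) : Prop :=
  (∀ F ∈ K, F.Finite) ∧
  (∅ : Set T) ∉ K ∧
  (∀ F₁ ∈ K, ∀ F₂ : Set T, F₂.Finite → F₁ ⊆ F₂ → F₂ ∈ K) ∧
  (∀ F ∈ K, F \ Tneg ∈ K) ∧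
  (∀ t ∈ cl (∅ : Set T), ({t} : Set T) ∈ K) ∧
  (∀ W ⊆ K, W.Finite → W.Nonempty →
    ∀ f : Sel W → T, (∀ σ : Sel W, f σ ∈ cl (σ.1 '' W)) → Set.range f ∈ K)

/-- The set of things whose singletons belong to `K`. -/
def sdt (K : Set (Set T)) : Set T := {t | ({t} : Set T) ∈ K}

/-- The SDS of all sets of things meeting `D`. -/
def sds (D : Set T) : Set (Set T) := {A | (A ∩ D).Nonempty}

/-- The SDFS of all finite sets of things meeting `D`. -/
def sdfs (D : Set T) : Set (Set T) := {F | F.Finite ∧ (F ∩ D).Nonempty}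

/-- The event `𝒟_A` of all coherent SDTs meeting `A`. -/
def evA (cl : Set T → Set T) (Tneg : Set T) (A : Set T) : Set (Set T) :=
  {D | CohSDT cl Tneg D ∧ (A ∩ D).Nonempty}

/-- The event `E(W)` of all coherent SDTs meeting every member of `W`
(with `E(∅)` equal to the set of all coherent SDTs). -/
def ev (cl : Set T → Set T) (Tneg : Set T) (W : Set (Set T)) : Set (Set T) :=
  {D | CohSDT cl Tneg D ∧ ∀ A ∈ W, (A ∩ D).Nonempty}

/-- An SDS is conjunctive if every desirable set contains a desirable
singleton. -/
def Conjunctive (K : Set (Set T)) : Prop :=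
  ∀ A ∈ K, ∃ t ∈ A, ({t} : Set T) ∈ K

/-- Completeness of an SDS. -/
def CompleteSDS (K : Set (Set T)) : Prop :=
  ∀ A₁ A₂ : Set T, A₁ ∪ A₂ ∈ K → A₁ ∈ K ∨ A₂ ∈ K

/-- The finitary part `K^f` of an SDS. -/
def finPart (K : Set (Set T)) : Set (Set T) :=
  {A | ∃ B ∈ K, B.Finite ∧ B ⊆ A}

/-- An SDS is finitary if every desirable set has a finite desirable subset. -/
def FinitarySDS (K : Set (Set T)) : Prop :=
  ∀ A ∈ K, ∃ B, B.Finite ∧ B ⊆ A ∧ B ∈ K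

/-- The lattice of events `E`. -/
def Ecal (cl : Set T → Set T) (Tneg : Set T) : Set (Set (Set T)) :=
  {E | ∃ W : Set (Set T), E = ev cl Tneg W}

/-- The lattice of finitary events `E_fin`. -/
def Efin (cl : Set T → Set T) (Tneg : Set T) : Set (Set (Set T)) :=
  {E | ∃ W : Set (Set T), W.Finite ∧ E = ev cl Tneg W}

/-- A filter on a lattice of events `L` ordered by inclusion. -/
def IsFilterOn (L F : Set (Set (Set T))) : Prop :=
  F ⊆ L ∧ F.Nonempty ∧
  (∀ E₁ ∈ F, ∀ E₂ ∈ L, E₁ ⊆ E₂ → E₂ ∈ F) ∧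
  (∀ E₁ ∈ F, ∀ E₂ ∈ F, E₁ ∩ E₂ ∈ F)

/-- A proper filter on `L`. -/
def IsProperFilterOn (L F : Set (Set (Set T))) : Prop :=
  IsFilterOn L F ∧ F ≠ L

/-- A prime filter on `L`. -/
def IsPrimeFilterOn (L F : Set (Set (Set T))) : Prop :=
  IsProperFilterOn L F ∧
  ∀ E₁ ∈ L, ∀ E₂ ∈ L, E₁ ∪ E₂ ∈ F → E₁ ∈ F ∨ E₂ ∈ F

/-- A proper principal filter on `L`: the upset of some nonempty `E₀ ∈ L`. -/
def IsProperPrincipalFilterOn (L F : Set (Set (Set T))) : Prop :=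
  ∃ E₀ ∈ L, E₀ ≠ (∅ : Set (Set T)) ∧ F = {E' | E' ∈ L ∧ E₀ ⊆ E'}

/-- The map `f̂` sending an SDS to the collection of events of its finite
subcollections. -/
def fhat (cl : Set T → Set T) (Tneg : Set T) (K : Set (Set T)) :
    Set (Set (Set T)) :=
  {E | ∃ W : Set (Set T), W ⊆ K ∧ W.Finite ∧ E = ev cl Tneg W}

/-- The map `f` sending an SDS to the collection of events of all of its
subcollections. -/
def fprin (cl : Set T → Set T) (Tneg : Set T) (K : Set (Set T)) :
    Set (Set (Set T)) :=
  {E | ∃ W : Set (Set T), W ⊆ K ∧ E = ev cl Tneg W}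

/-- The map `d` sending a collection of events to the SDS it determines. -/
def dmap (cl : Set T → Set T) (Tneg : Set T) (F : Set (Set (Set T))) :
    Set (Set T) :=
  {A : Set T | evA cl Tneg A ∈ F}

/-- `K` is finitely consistent: it is included in some finitely coherent SDS. -/
def FinConsistent (cl : Set T → Set T) (Tneg : Set T) (K : Set (Set T)) : Prop :=
  ∃ K' : Set (Set T), FinCohSDS cl Tneg K' ∧ K ⊆ K'

/-- `K` is consistent: it is included in some coherent SDS. -/
def Consistent (cl : Set T → Set T) (Tneg : Set T) (K : Set (Set T)) : Prop :=
  ∃ K' : Set (Set T), CohSDS cl Tneg K' ∧ K ⊆ K'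

/-- The finitary closure operator on SDSes (with value `𝒫(T)` when `K` is not
finitely consistent, via the empty-intersection convention). -/
def clFin (cl : Set T → Set T) (Tneg : Set T) (K : Set (Set T)) : Set (Set T) :=
  ⋂₀ {K' : Set (Set T) | FinCohSDS cl Tneg K' ∧ K ⊆ K'}

/-- The closure operator on SDSes (with value `𝒫(T)` when `K` is not
consistent, via the empty-intersection convention). -/
def clSDS (cl : Set T → Set T) (Tneg : Set T) (K : Set (Set T)) : Set (Set T) :=
  ⋂₀ {K' : Set (Set T) | CohSDS cl Tneg K' ∧ K ⊆ K'}

lemma transfer_aux (cl : Set T → Set T) (Tneg : Set T) (hcl : IsClosure cl)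
    (hsan : cl (∅ : Set T) ∩ Tneg = ∅) (K : Set (Set T))
    (hK2 : ∀ A₁ ∈ K, ∀ A₂ : Set T, A₁ ⊆ A₂ → A₂ ∈ K)
    (hK3 : ∀ A ∈ K, A \ Tneg ∈ K)
    (hK4 : ∀ t ∈ cl (∅ : Set T), ({t} : Set T) ∈ K)
    (W₁ W₂ : Set (Set T))
    (hK5 : W₁ ⊆ K → W₁.Nonempty →
      ∀ f : Sel W₁ → T, (∀ σ : Sel W₁, f σ ∈ cl (σ.1 '' W₁)) → Set.range f ∈ K)
    (hsub : ev cl Tneg W₁ ⊆ ev cl Tneg W₂) (hW₁ : W₁ ⊆ K) : W₂ ⊆ K := by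
  intro A hA
  rcases W₁.eq_empty_or_nonempty with h | hne
  · -- `cl ∅` is a coherent SDT belonging to `ev W₁ = 𝔻`
    have hcoh : CohSDT cl Tneg (cl (∅ : Set T)) := ⟨hcl.2.2 _, hsan⟩
    have hmem : cl (∅ : Set T) ∈ ev cl Tneg W₁ := by
      refine ⟨hcoh, ?_⟩
      intro B hB
      simp [h] at hB
    obtain ⟨t, htA, htc⟩ := (hsub hmem).2 A hA
    exact hK2 _ (hK4 t htc) A (by simpa using htA)
  · have hchoice : ∀ σ : Sel W₁, ∃ t, t ∈ cl (σ.1 '' W₁) ∧ (t ∈ A ∨ t ∈ Tneg) := by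
      intro σ
      by_cases hneg : (cl (σ.1 '' W₁) ∩ Tneg).Nonempty
      · obtain ⟨t, ht⟩ := hneg
        exact ⟨t, ht.1, Or.inr ht.2⟩
      · have hcoh : CohSDT cl Tneg (cl (σ.1 '' W₁)) :=
          ⟨hcl.2.2 _, Set.not_nonempty_iff_eq_empty.mp hneg⟩
        have hmem : cl (σ.1 '' W₁) ∈ ev cl Tneg W₁ := by
          refine ⟨hcoh, fun B hB => ⟨σ.1 B, σ.2 B hB, hcl.1 _ (Set.mem_image_of_mem _ hB)⟩⟩
        obtain ⟨t, htA, htD⟩ := (hsub hmem).2 A hA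
        exact ⟨t, htD, Or.inl htA⟩
    choose f hf1 hf2 using hchoice
    have hrange := hK5 hW₁ hne f hf1
    refine hK2 _ (hK3 _ hrange) A ?_
    rintro t ⟨⟨σ, rfl⟩, htneg⟩
    rcases hf2 σ with h | h
    · exact h
    · exact absurd h htneg

/-- It does not matter which collection generates an event: inclusions of
events transport membership in (finitely) coherent SDSes. -/
theorem event_inclusion_transfers (T : Type u) [Nonempty T]
    (cl : Set T → Set T) (Tneg : Set T)
    (hcl : IsClosure cl) (hsan : cl (∅ : Set T) ∩ Tneg = ∅) :
    (∀ K : Set (Set T), CohSDS cl Tneg K → ∀ W₁ W₂ : Set (Set T),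
      ((ev cl Tneg W₁ ⊆ ev cl Tneg W₂ → W₁ ⊆ K → W₂ ⊆ K) ∧
       (ev cl Tneg W₁ = ev cl Tneg W₂ → (W₁ ⊆ K ↔ W₂ ⊆ K)))) ∧
    (∀ K : Set (Set T), FinCohSDS cl Tneg K → ∀ W₁ W₂ : Set (Set T),
      W₁.Finite → W₂.Finite →
      ((ev cl Tneg W₁ ⊆ ev cl Tneg W₂ → W₁ ⊆ K → W₂ ⊆ K) ∧
       (ev cl Tneg W₁ = ev cl Tneg W₂ → (W₁ ⊆ K ↔ W₂ ⊆ K)))) := by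
  constructor
  · intro K hK W₁ W₂
    have h12 : ev cl Tneg W₁ ⊆ ev cl Tneg W₂ → W₁ ⊆ K → W₂ ⊆ K :=
      transfer_aux cl Tneg hcl hsan K hK.2.1 hK.2.2.1 hK.2.2.2.1 W₁ W₂
        (fun hW hne f hf => hK.2.2.2.2 W₁ hW hne f hf)
    have h21 : ev cl Tneg W₂ ⊆ ev cl Tneg W₁ → W₂ ⊆ K → W₁ ⊆ K :=
      transfer_aux cl Tneg hcl hsan K hK.2.1 hK.2.2.1 hK.2.2.2.1 W₂ W₁
        (fun hW hne f hf => hK.2.2.2.2 W₂ hW hne f hf)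
    exact ⟨h12, fun heq => ⟨h12 heq.subset, h21 heq.symm.subset⟩⟩
  · intro K hK W₁ W₂ hW₁fin hW₂fin
    have h12 : ev cl Tneg W₁ ⊆ ev cl Tneg W₂ → W₁ ⊆ K → W₂ ⊆ K :=
      transfer_aux cl Tneg hcl hsan K hK.2.1 hK.2.2.1 hK.2.2.2.1 W₁ W₂
        (fun hW hne f hf => hK.2.2.2.2 W₁ hW hW₁fin hne f hf)
    have h21 : ev cl Tneg W₂ ⊆ ev cl Tneg W₁ → W₂ ⊆ K → W₁ ⊆ K :=
      transfer_aux cl Tneg hcl hsan K hK.2.1 hK.2.2.1 hK.2.2.2.1 W₂ W₁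
        (fun hW hne f hf => hK.2.2.2.2 W₂ hW hW₂fin hne f hf)
    exact ⟨h12, fun heq => ⟨h12 heq.subset, h21 heq.symm.subset⟩⟩
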